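/- arXiv:gr-qc/9711022 — 2 statements merged into one kernel-verified Lean document; each statement's English description precedes it below -/
import Mathlib

section
/- Constraint for divergence-free Weyl candidates (equation (11)). Let n ≥ 5 and let W_{abcd} be a smooth Weyl candidate on flat ℝⁿ that in addition is divergence-free, W^a_{bcd;a} = 0. If W admits a four times continuously differentiable Lanczos potential L_{abc} with L_{abc} = L_{[ab]c} and L_{ab}^{b} = 0 satisfying equation (5), then W^{ab}_{[cd;}{}^{i}{}_{|i|e]} = 0, i.e. the antisymmetrization over the lower indices c, d, e of the contracted second derivative ∂^i∂_i applied after ∂ on W^{ab}_{cd} vanishes. -/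
open scoped ContDiff

noncomputable section

/-- Partial derivative `∂ᵢ f` of a scalar field on flat `ℝⁿ` (points represented as
`Fin n → ℝ`, standard coordinates) in the `i`-th coordinate direction.  In Cartesian
coordinates on flat space this is the covariant derivative `;i`. -/
def pd {n : ℕ} (i : Fin n) (f : (Fin n → ℝ) → ℝ) : (Fin n → ℝ) → ℝ :=
  fun x => fderiv ℝ f x (Pi.single i 1)

/-- Components `η_{ab}` of the constant diagonal metric with diagonal entries `η a = ±1`;
since the entries are `±1` these coincide with the components `η^{ab}` of the inverse
metric. -/
def gm {n : ℕ} (η : Fin n → ℝ) (a b : Fin n) : ℝ := if a = b then η a else 0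

/-- Antisymmetrization over two index slots. -/
def asym2 {n : ℕ} (T : Fin n → Fin n → ℝ) (a b : Fin n) : ℝ := (T a b - T b a) / 2

/-- Antisymmetrization over three index slots. -/
def asym3 {n : ℕ} (T : Fin n → Fin n → Fin n → ℝ) (a b c : Fin n) : ℝ :=
  (T a b c - T a c b - T b a c + T b c a + T c a b - T c b a) / 6

/-- Simultaneous antisymmetrization over a pair of upper slots and a pair of lower slots. -/
def asym22 {n : ℕ} (T : Fin n → Fin n → Fin n → Fin n → ℝ) (a b c d : Fin n) : ℝ :=
  (T a b c d - T b a c d - T a b d c + T b a d c) / 4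

/-- Simultaneous antisymmetrization over a triple of upper slots and a triple of lower
slots (arguments ordered as `T upper₁ upper₂ upper₃ lower₁ lower₂ lower₃`). -/
def asym33 {n : ℕ} (T : Fin n → Fin n → Fin n → Fin n → Fin n → Fin n → ℝ)
    (a b f c d e : Fin n) : ℝ :=
  asym3 (fun a b f => asym3 (fun c d e => T a b f c d e) c d e) a b f

/-- A Weyl candidate: a 4-tensor field with the index symmetries (3a)–(3d):
antisymmetry in the first and in the second index pair, symmetry under interchange of the
two pairs, vanishing cyclic sum `W_{a[bcd]} = 0`, and vanishing trace `W^a{}_{bad} = 0`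
(the trace being taken with the metric `η`). -/
def WeylCandidate {n : ℕ} (η : Fin n → ℝ)
    (W : (Fin n → ℝ) → Fin n → Fin n → Fin n → Fin n → ℝ) : Prop :=
  (∀ x a b c d, W x a b c d = - W x b a c d) ∧
  (∀ x a b c d, W x a b c d = - W x a b d c) ∧
  (∀ x a b c d, W x a b c d = W x c d a b) ∧
  (∀ x a b c d, asym3 (fun b c d => W x a b c d) b c d = 0) ∧
  (∀ x b d, ∑ a, η a * W x a b a d = 0)

/-- The right-hand side of the Lanczos potential equation (4), in the equivalent fully
lowered form (the free indices `a b`, raised in the paper, are lowered with the invertible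
diagonal metric `η`, which only multiplies each component equation by `η a * η b ≠ 0`).
Each contracted (dummy) index pair carries a factor `η i` coming from the inverse
metric. -/
def rhs4 {n : ℕ} (η : Fin n → ℝ) (L : (Fin n → ℝ) → Fin n → Fin n → Fin n → ℝ)
    (x : Fin n → ℝ) (a b c d : Fin n) : ℝ :=
  -- 2 L^{ab}{}_{[c;d]}
  (pd d (L · a b c) x - pd c (L · a b d) x)
  -- + 2 L_{cd}{}^{[a;b]}
  + (pd b (L · c d a) x - pd a (L · c d b) x)
  -- − (4/(n−2)) δ^{[a}_{[c} ( L^{b]i}{}_{d];i} − L^{b]i}{}_{|i|;d]} + L_{d]i}{}^{b];i} − L_{d]i}{}^{|i|;b]} )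
  - (4 / ((n : ℝ) - 2)) *
      asym22 (fun a b c d =>
        gm η a c *
          ∑ i, η i *
            (pd i (L · b i d) x - pd d (L · b i i) x
              + pd i (L · d i b) x - pd b (L · d i i) x)) a b c d
  -- + (8/((n−2)(n−1))) δ^{a}_{[c} δ^{b}_{d]} L^{ij}{}_{i;j}
  + (8 / (((n : ℝ) - 2) * ((n : ℝ) - 1))) *
      ((gm η a c * gm η b d - gm η a d * gm η b c) / 2) *
      ∑ i, ∑ j, η i * η j * pd j (L · i j i) x

/-- Equation (4): `L` is a Lanczos potential for `W` (fully lowered, equivalent form). -/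
def Eq4 {n : ℕ} (η : Fin n → ℝ)
    (W : (Fin n → ℝ) → Fin n → Fin n → Fin n → Fin n → ℝ)
    (L : (Fin n → ℝ) → Fin n → Fin n → Fin n → ℝ) : Prop :=
  ∀ x a b c d, W x a b c d = rhs4 η L x a b c d

/-- The right-hand side of equation (5) (equation (4) in the Lanczos algebraic gauge
`L_{ab}{}^b = 0`), fully lowered form:
`2 L^{ab}{}_{[c;d]} + 2 L_{cd}{}^{[a;b]} − (4/(n−2)) δ^{[a}_{[c} ( L^{b]i}{}_{d];i} + L_{d]i}{}^{b];i} )`. -/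
def rhs5 {n : ℕ} (η : Fin n → ℝ) (L : (Fin n → ℝ) → Fin n → Fin n → Fin n → ℝ)
    (x : Fin n → ℝ) (a b c d : Fin n) : ℝ :=
  (pd d (L · a b c) x - pd c (L · a b d) x)
  + (pd b (L · c d a) x - pd a (L · c d b) x)
  - (4 / ((n : ℝ) - 2)) *
      asym22 (fun a b c d =>
        gm η a c * ∑ i, η i * (pd i (L · b i d) x + pd i (L · d i b) x)) a b c d

/-- Equation (5). -/
def Eq5 {n : ℕ} (η : Fin n → ℝ)
    (W : (Fin n → ℝ) → Fin n → Fin n → Fin n → Fin n → ℝ)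
    (L : (Fin n → ℝ) → Fin n → Fin n → Fin n → ℝ) : Prop :=
  ∀ x a b c d, W x a b c d = rhs5 η L x a b c d

/-- Constraint (8), fully lowered form:
`W^{[ab}{}_{[cd;e]}{}^{f]} = (1/(n−4)) δ^{[a}_{[c} W^{bf]}{}_{de];i}{}^{i}
 + (2/(n−4)) δ^{[a}_{[c} W^{|i|b}{}_{de];i}{}^{f]} + (2/(n−4)) δ^{[a}_{[c} W^{bf]}{}_{|i|d;e]}{}^{i}
 + (4/((n−3)(n−4))) δ^{[a}_{[c} δ^{b}_{d} W^{f]i}{}_{e]j;i}{}^{j}`. -/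
def Constraint8 {n : ℕ} (η : Fin n → ℝ)
    (W : (Fin n → ℝ) → Fin n → Fin n → Fin n → Fin n → ℝ) : Prop :=
  ∀ x a b f c d e,
    asym33 (fun a b f c d e => pd f (pd e (W · a b c d)) x) a b f c d e =
      (1 / ((n : ℝ) - 4)) *
          asym33 (fun a b f c d e =>
            gm η a c * ∑ i, η i * pd i (pd i (W · b f d e)) x) a b f c d e
      + (2 / ((n : ℝ) - 4)) *
          asym33 (fun a b f c d e =>
            gm η a c * ∑ i, η i * pd f (pd i (W · i b d e)) x) a b f c d e
      + (2 / ((n : ℝ) - 4)) *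
          asym33 (fun a b f c d e =>
            gm η a c * ∑ i, η i * pd i (pd e (W · b f i d)) x) a b f c d e
      + (4 / (((n : ℝ) - 3) * ((n : ℝ) - 4))) *
          asym33 (fun a b f c d e =>
            gm η a c * gm η b d *
              ∑ i, ∑ j, η i * η j * pd j (pd i (W · f i e j)) x) a b f c d e

/-- Constraint (10), fully lowered form:
`W^{[ab}{}_{cd;i}{}^{|i|e]} + 2 W^{[ab}{}_{i[c;d]}{}^{|i|e]}
 + (4/(n−3)) δ^{[a}_{[c} W^{b|i}{}_{d]j;i}{}^{j|e]} = 0`,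
antisymmetrized over the upper indices `a b e` and (where indicated) the lower indices
`c d`. -/
def Constraint10 {n : ℕ} (η : Fin n → ℝ)
    (W : (Fin n → ℝ) → Fin n → Fin n → Fin n → Fin n → ℝ) : Prop :=
  ∀ x a b e c d,
    asym3 (fun a b e =>
      (∑ i, η i * pd e (pd i (pd i (W · a b c d))) x)
      + 2 * asym2 (fun c d =>
            ∑ i, η i * pd e (pd i (pd d (W · a b i c))) x) c d
      + (4 / ((n : ℝ) - 3)) * asym2 (fun c d =>
            gm η a c *
              ∑ i, ∑ j, η i * η j * pd e (pd j (pd i (W · b i d j))) x) c d) a b e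
    = 0

namespace DFWaux
variable {n : ℕ}

lemma pd_congr {f g : (Fin n → ℝ) → ℝ} (i : Fin n) (h : f = g) : pd i f = pd i g := by rw [h]

lemma pd_zero (i : Fin n) : pd i (fun _ : Fin n → ℝ => (0:ℝ)) = fun _ => 0 := by
  funext x; simp [pd]

lemma pd_neg {f : (Fin n → ℝ) → ℝ} (i : Fin n) :
    pd i (fun x => -(f x)) = fun x => -(pd i f x) := by
  funext x; simp [pd, fderiv_neg]

lemma pd_add {f g : (Fin n → ℝ) → ℝ} (i : Fin n) (hf : Differentiable ℝ f)
    (hg : Differentiable ℝ g) :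
    pd i (fun x => f x + g x) = fun x => pd i f x + pd i g x := by
  funext x; simp [pd, fderiv_fun_add (hf x) (hg x)]

lemma pd_etasum (i : Fin n) (η : Fin n → ℝ) (g : Fin n → (Fin n → ℝ) → ℝ)
    (hg : ∀ a, Differentiable ℝ (g a)) :
    pd i (fun y => ∑ a, η a * g a y) = fun x => ∑ a, η a * pd i (g a) x := by
  funext x
  simp only [pd]
  rw [fderiv_fun_sum (fun a _ => ((hg a x).const_mul (η a)))]
  rw [ContinuousLinearMap.sum_apply]
  refine Finset.sum_congr rfl fun a _ => ?_
  rw [fderiv_const_mul (hg a x) (η a), ContinuousLinearMap.smul_apply, smul_eq_mul]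

lemma contDiff_pd {k m : ℕ} {f : (Fin n → ℝ) → ℝ} (hf : ContDiff ℝ (k:ℕ) f)
    (h : m + 1 ≤ k) (i : Fin n) : ContDiff ℝ (m:ℕ) (pd i f) := by
  have h1 : ContDiff ℝ (m:ℕ) (fderiv ℝ f) := hf.fderiv_right (by exact_mod_cast h)
  exact h1.clm_apply contDiff_const

lemma cdiff {k : ℕ} {f : (Fin n → ℝ) → ℝ} (h : ContDiff ℝ (k:ℕ) f) (hk : 1 ≤ k) :
    Differentiable ℝ f := h.differentiable (by norm_cast; omega)

lemma contDiff_etasum {m : WithTop ℕ∞} (η : Fin n → ℝ) {g : Fin n → (Fin n → ℝ) → ℝ}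
    (hg : ∀ a, ContDiff ℝ m (g a)) :
    ContDiff ℝ m (fun x => ∑ a, η a * g a x) :=
  ContDiff.sum fun a _ => contDiff_const.mul (hg a)

lemma pd_comm (f : (Fin n → ℝ) → ℝ) (hf : ContDiff ℝ (2:ℕ) f) (i j : Fin n) :
    pd i (pd j f) = pd j (pd i f) := by
  funext x
  have hd : Differentiable ℝ (fderiv ℝ f) :=
    (hf.fderiv_right (m := 1) (by norm_num)).differentiable (by norm_num)
  have hsymm : IsSymmSndFDerivAt ℝ f x :=
    (hf.contDiffAt).isSymmSndFDerivAt (by norm_num)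
  have e : ∀ u v : Fin n → ℝ, fderiv ℝ (fun y => fderiv ℝ f y u) x v
      = fderiv ℝ (fderiv ℝ f) x v u := by
    intro u v
    rw [fderiv_clm_apply (hd x) (differentiableAt_const u)]
    simp
  show fderiv ℝ (fun y => fderiv ℝ f y (Pi.single j 1)) x (Pi.single i 1)
      = fderiv ℝ (fun y => fderiv ℝ f y (Pi.single i 1)) x (Pi.single j 1)
  rw [e, e, hsymm]

lemma pd_lin8 (i : Fin n) (a1 a2 a3 a4 a5 a6 a7 a8 : ℝ)
    (f1 f2 f3 f4 f5 f6 f7 f8 : (Fin n → ℝ) → ℝ)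
    (h1 : Differentiable ℝ f1) (h2 : Differentiable ℝ f2) (h3 : Differentiable ℝ f3)
    (h4 : Differentiable ℝ f4) (h5 : Differentiable ℝ f5) (h6 : Differentiable ℝ f6)
    (h7 : Differentiable ℝ f7) (h8 : Differentiable ℝ f8) :
    pd i (fun x => a1 * f1 x + a2 * f2 x + a3 * f3 x + a4 * f4 x + a5 * f5 x
        + a6 * f6 x + a7 * f7 x + a8 * f8 x)
    = fun x => a1 * pd i f1 x + a2 * pd i f2 x + a3 * pd i f3 x + a4 * pd i f4 x
        + a5 * pd i f5 x + a6 * pd i f6 x + a7 * pd i f7 x + a8 * pd i f8 x := by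
  funext x
  have H : HasFDerivAt (fun x => a1 * f1 x + a2 * f2 x + a3 * f3 x + a4 * f4 x + a5 * f5 x
        + a6 * f6 x + a7 * f7 x + a8 * f8 x)
      (a1 • fderiv ℝ f1 x + a2 • fderiv ℝ f2 x + a3 • fderiv ℝ f3 x + a4 • fderiv ℝ f4 x
        + a5 • fderiv ℝ f5 x + a6 • fderiv ℝ f6 x + a7 • fderiv ℝ f7 x + a8 • fderiv ℝ f8 x) x := by
    exact ((((((((h1 x).hasFDerivAt.const_mul a1).add ((h2 x).hasFDerivAt.const_mul a2)).add
      ((h3 x).hasFDerivAt.const_mul a3)).add ((h4 x).hasFDerivAt.const_mul a4)).add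
      ((h5 x).hasFDerivAt.const_mul a5)).add ((h6 x).hasFDerivAt.const_mul a6)).add
      ((h7 x).hasFDerivAt.const_mul a7)).add ((h8 x).hasFDerivAt.const_mul a8)
  simp only [pd, H.fderiv, ContinuousLinearMap.add_apply, ContinuousLinearMap.smul_apply,
    smul_eq_mul]

lemma sum_gm {η : Fin n → ℝ} (hη : ∀ i, η i = 1 ∨ η i = -1) (c : Fin n) (F : Fin n → ℝ) :
    ∑ a, η a * (gm η a c * F a) = F c := by
  rw [Finset.sum_eq_single c]
  · rcases hη c with h | h <;> simp [gm, h]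
  · intro a _ hac; simp [gm, hac]
  · simp

lemma gm_comm (η : Fin n → ℝ) (a b : Fin n) : gm η a b = gm η b a := by
  unfold gm
  by_cases h : a = b
  · subst h; simp
  · rw [if_neg h, if_neg (Ne.symm h)]

lemma sum_eta_sq {η : Fin n → ℝ} (hη : ∀ i, η i = 1 ∨ η i = -1) :
    ∑ a, η a * η a = (n : ℝ) := by
  have : ∀ a : Fin n, η a * η a = 1 := fun a => by rcases hη a with h | h <;> rw [h] <;> ring
  simp [this]

lemma sum_antisym_zero (F : Fin n → Fin n → ℝ) (h : ∀ a b, F a b = - F b a) :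
    ∑ a, ∑ b, F a b = 0 := by
  have h1 : ∑ a, ∑ b, F a b = - ∑ a, ∑ b, F b a := by
    rw [← Finset.sum_neg_distrib]
    refine Finset.sum_congr rfl fun a _ => ?_
    rw [← Finset.sum_neg_distrib]
    exact Finset.sum_congr rfl fun b _ => h a b
  have h2 : ∑ a, ∑ b, F b a = ∑ a, ∑ b, F a b := Finset.sum_comm
  linarith [h1, h2.symm ▸ h1]

end DFWaux
namespace DFWaux
variable {n : ℕ}

def boxd (η : Fin n → ℝ) (f : (Fin n → ℝ) → ℝ) : (Fin n → ℝ) → ℝ :=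
  fun x => ∑ i, η i * pd i (pd i f) x

section defs
variable (η : Fin n → ℝ) (L : (Fin n → ℝ) → Fin n → Fin n → Fin n → ℝ)

def Vf (b c : Fin n) : (Fin n → ℝ) → ℝ := fun x => ∑ a, η a * pd a (fun y => L y a b c) x
def Uf (c d : Fin n) : (Fin n → ℝ) → ℝ := fun x => ∑ a, η a * pd a (fun y => L y c d a) x
def Mf (b d : Fin n) : (Fin n → ℝ) → ℝ :=
  fun x => ∑ i, η i * (pd i (fun y => L y b i d) x + pd i (fun y => L y d i b) x)
def Nf (d : Fin n) : (Fin n → ℝ) → ℝ := fun x => ∑ a, η a * pd a (Mf η L a d) x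
def Pf (d : Fin n) : (Fin n → ℝ) → ℝ := fun x => ∑ a, η a * pd a (Vf η L d a) x

end defs

section smooth
variable {η : Fin n → ℝ} {L : (Fin n → ℝ) → Fin n → Fin n → Fin n → ℝ}
  (hL : ∀ a b c, ContDiff ℝ ((4:ℕ) : WithTop ℕ∞) (fun x => L x a b c))
include hL

lemma cd_Vf (b c : Fin n) : ContDiff ℝ ((3:ℕ) : WithTop ℕ∞) (Vf η L b c) :=
  contDiff_etasum η fun a => contDiff_pd (k:=4) (m:=3) (hL a b c) (by norm_num) a

lemma cd_Uf (c d : Fin n) : ContDiff ℝ ((3:ℕ) : WithTop ℕ∞) (Uf η L c d) :=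
  contDiff_etasum η fun a => contDiff_pd (k:=4) (m:=3) (hL c d a) (by norm_num) a

lemma cd_Mf (b d : Fin n) : ContDiff ℝ ((3:ℕ) : WithTop ℕ∞) (Mf η L b d) :=
  contDiff_etasum η fun i =>
    (contDiff_pd (k:=4) (m:=3) (hL b i d) (by norm_num) i).add (contDiff_pd (k:=4) (m:=3) (hL d i b) (by norm_num) i)

lemma cd_Nf (d : Fin n) : ContDiff ℝ ((2:ℕ) : WithTop ℕ∞) (Nf η L d) :=
  contDiff_etasum η fun a => contDiff_pd (k:=3) (m:=2) (cd_Mf hL a d) (by norm_num) a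

lemma cd_Pf (d : Fin n) : ContDiff ℝ ((2:ℕ) : WithTop ℕ∞) (Pf η L d) :=
  contDiff_etasum η fun a => contDiff_pd (k:=3) (m:=2) (cd_Vf hL d a) (by norm_num) a

omit hL in
lemma cd_boxd {k m : ℕ} {f : (Fin n → ℝ) → ℝ} (hf : ContDiff ℝ (k:ℕ) f)
    (h : m + 2 ≤ k) (η' : Fin n → ℝ) : ContDiff ℝ (m:ℕ) (boxd η' f) :=
  contDiff_etasum η' fun i =>
    contDiff_pd (k:=m+1) (m:=m) (contDiff_pd (k:=k) (m:=m+1) hf (by omega) i) (le_refl (m+1)) i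

end smooth

section structural
variable {η : Fin n → ℝ} {L : (Fin n → ℝ) → Fin n → Fin n → Fin n → ℝ}

/-- box commutes with pd for C³ functions. -/
lemma box_pd {f : (Fin n → ℝ) → ℝ} (hf : ContDiff ℝ ((3:ℕ) : WithTop ℕ∞) f)
    (η' : Fin n → ℝ) (j : Fin n) : boxd η' (pd j f) = pd j (boxd η' f) := by
  have hf2 : ContDiff ℝ ((2:ℕ) : WithTop ℕ∞) f := hf.of_le (by norm_num)
  have e : ∀ i : Fin n, pd i (pd i (pd j f)) = pd j (pd i (pd i f)) := by
    intro i
    rw [pd_comm f hf2 i j]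
    exact pd_comm (pd i f) (contDiff_pd (k:=3) (m:=2) hf (by norm_num) i) i j
  funext x
  show ∑ i, η' i * pd i (pd i (pd j f)) x = pd j (boxd η' f) x
  calc ∑ i, η' i * pd i (pd i (pd j f)) x = ∑ i, η' i * pd j (pd i (pd i f)) x :=
        Finset.sum_congr rfl fun i _ => by rw [e i]
    _ = pd j (fun y => ∑ i, η' i * pd i (pd i f) y) x := by
        rw [pd_etasum j η' _ (fun i => cdiff
          (contDiff_pd (k:=2) (m:=1) (contDiff_pd (k:=3) (m:=2) hf (by norm_num) i)
            (by norm_num) i) (by norm_num))]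
    _ = pd j (boxd η' f) x := rfl

/-- pd e (pd j (pd d f)) = pd d (pd j (pd e f)) for C³ f. -/
lemma pd3_swap {f : (Fin n → ℝ) → ℝ} (hf : ContDiff ℝ ((3:ℕ) : WithTop ℕ∞) f)
    (j d e : Fin n) : pd e (pd j (pd d f)) = pd d (pd j (pd e f)) := by
  have hf2 : ContDiff ℝ ((2:ℕ) : WithTop ℕ∞) f := hf.of_le (by norm_num)
  rw [pd_comm f hf2 j d, pd_comm (pd j f) (contDiff_pd (k:=3) (m:=2) hf (by norm_num) j) e d,
    pd_comm f hf2 e j]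

lemma Mf_symm (b d : Fin n) : Mf η L b d = Mf η L d b := by
  funext x; unfold Mf
  exact Finset.sum_congr rfl fun i _ => by ring

end structural
end DFWaux
namespace DFWaux
variable {n : ℕ}

/-- Generic 2-term linear push. -/
lemma pd_negadd (j : Fin n) {f g : (Fin n → ℝ) → ℝ} (hf : Differentiable ℝ f)
    (hg : Differentiable ℝ g) :
    pd j (fun x => -(f x + g x)) = fun x => -(pd j f x + pd j g x) := by
  funext x
  have H : HasFDerivAt (fun x => -(f x + g x)) (-(fderiv ℝ f x + fderiv ℝ g x)) x :=
    ((hf x).hasFDerivAt.add (hg x).hasFDerivAt).neg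
  simp only [pd, H.fderiv, ContinuousLinearMap.neg_apply, ContinuousLinearMap.add_apply]

/-- Push pd through the 7-term HX-type shape. -/
lemma pd_shape7 (j : Fin n) (κ c1 c2 : ℝ) (t1 t2 t3 t4 t5 t6 t7 : (Fin n → ℝ) → ℝ)
    (h1 : Differentiable ℝ t1) (h2 : Differentiable ℝ t2) (h3 : Differentiable ℝ t3)
    (h4 : Differentiable ℝ t4) (h5 : Differentiable ℝ t5) (h6 : Differentiable ℝ t6)
    (h7 : Differentiable ℝ t7) :
    pd j (fun x => t1 x - t2 x + t3 x - κ * (t4 x - t5 x - c1 * t6 x + c2 * t7 x))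
    = fun x => pd j t1 x - pd j t2 x + pd j t3 x
        - κ * (pd j t4 x - pd j t5 x - c1 * pd j t6 x + c2 * pd j t7 x) := by
  have e : (fun x => t1 x - t2 x + t3 x - κ * (t4 x - t5 x - c1 * t6 x + c2 * t7 x))
      = fun x => (1:ℝ) * t1 x + (-1) * t2 x + (1:ℝ) * t3 x + (-κ) * t4 x + κ * t5 x
          + (κ * c1) * t6 x + (-(κ * c2)) * t7 x + (0:ℝ) * t1 x := by
    funext x; ring
  rw [e, pd_lin8 j _ _ _ _ _ _ _ _ _ _ _ _ _ _ _ _ h1 h2 h3 h4 h5 h6 h7 h1]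
  funext x; ring

/-- Push pd through the 8-term rhs5-type shape. -/
lemma pd_shape8 (j : Fin n) (κ c1 c2 c3 c4 : ℝ) (t1 t2 t3 t4 t5 t6 t7 t8 : (Fin n → ℝ) → ℝ)
    (h1 : Differentiable ℝ t1) (h2 : Differentiable ℝ t2) (h3 : Differentiable ℝ t3)
    (h4 : Differentiable ℝ t4) (h5 : Differentiable ℝ t5) (h6 : Differentiable ℝ t6)
    (h7 : Differentiable ℝ t7) (h8 : Differentiable ℝ t8) :
    pd j (fun x => t1 x - t2 x + t3 x - t4 x
        - κ * (c1 * t5 x - c2 * t6 x - c3 * t7 x + c4 * t8 x))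
    = fun x => pd j t1 x - pd j t2 x + pd j t3 x - pd j t4 x
        - κ * (c1 * pd j t5 x - c2 * pd j t6 x - c3 * pd j t7 x + c4 * pd j t8 x) := by
  have e : (fun x => t1 x - t2 x + t3 x - t4 x
        - κ * (c1 * t5 x - c2 * t6 x - c3 * t7 x + c4 * t8 x))
      = fun x => (1:ℝ) * t1 x + (-1) * t2 x + (1:ℝ) * t3 x + (-1) * t4 x
          + (-(κ * c1)) * t5 x + (κ * c2) * t6 x + (κ * c3) * t7 x + (-(κ * c4)) * t8 x := by
    funext x; ring
  rw [e, pd_lin8 j _ _ _ _ _ _ _ _ _ _ _ _ _ _ _ _ h1 h2 h3 h4 h5 h6 h7 h8]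
  funext x; ring

/-- Split a sum of an 8-term linear combination. -/
lemma sum_split8 (a1 a2 a3 a4 a5 a6 a7 a8 : ℝ) (s1 s2 s3 s4 s5 s6 s7 s8 : Fin n → ℝ) :
    ∑ i, (a1 * s1 i + a2 * s2 i + a3 * s3 i + a4 * s4 i + a5 * s5 i + a6 * s6 i
      + a7 * s7 i + a8 * s8 i)
    = a1 * ∑ i, s1 i + a2 * ∑ i, s2 i + a3 * ∑ i, s3 i + a4 * ∑ i, s4 i
      + a5 * ∑ i, s5 i + a6 * ∑ i, s6 i + a7 * ∑ i, s7 i + a8 * ∑ i, s8 i := by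
  simp only [Finset.sum_add_distrib, ← Finset.mul_sum]

/-- Interchange a contracted derivative with an outer pd. -/
lemma sum_eta_pd_swap (η : Fin n → ℝ) (j : Fin n) (f : Fin n → (Fin n → ℝ) → ℝ)
    (hf : ∀ a, ContDiff ℝ ((2:ℕ) : WithTop ℕ∞) (f a)) (x : Fin n → ℝ) :
    ∑ a, η a * pd a (pd j (f a)) x = pd j (fun y => ∑ a, η a * pd a (f a) y) x := by
  have e : ∀ a : Fin n, pd a (pd j (f a)) = pd j (pd a (f a)) := fun a =>
    (pd_comm (f a) (hf a) j a).symm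
  calc ∑ a, η a * pd a (pd j (f a)) x = ∑ a, η a * pd j (pd a (f a)) x :=
        Finset.sum_congr rfl fun a _ => by rw [e a]
    _ = pd j (fun y => ∑ a, η a * pd a (f a) y) x := by
        rw [pd_etasum j η (fun a => pd a (f a))
          (fun a => cdiff (contDiff_pd (k:=2) (m:=1) (hf a) (by norm_num) a) (by norm_num))]

/-- box of an η-weighted sum. -/
lemma box_etasum (η η' : Fin n → ℝ) (g : Fin n → (Fin n → ℝ) → ℝ)
    (hg : ∀ a, ContDiff ℝ ((2:ℕ) : WithTop ℕ∞) (g a)) (x : Fin n → ℝ) :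
    boxd η (fun y => ∑ a, η' a * g a y) x = ∑ a, η' a * boxd η (g a) x := by
  have h1 : ∀ i : Fin n, pd i (fun y => ∑ a, η' a * g a y)
      = fun z => ∑ a, η' a * pd i (g a) z :=
    fun i => pd_etasum i η' g (fun a => cdiff (hg a) (by norm_num))
  have h2 : ∀ i : Fin n, pd i (pd i (fun y => ∑ a, η' a * g a y)) x
      = ∑ a, η' a * pd i (pd i (g a)) x := by
    intro i
    rw [pd_congr i (h1 i), pd_etasum i η' (fun a => pd i (g a))
      (fun a => cdiff (contDiff_pd (k:=2) (m:=1) (hg a) (by norm_num) i) (by norm_num))]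
  calc boxd η (fun y => ∑ a, η' a * g a y) x
      = ∑ i, η i * ∑ a, η' a * pd i (pd i (g a)) x :=
        Finset.sum_congr rfl fun i _ => by rw [h2 i]
    _ = ∑ a, η' a * ∑ i, η i * pd i (pd i (g a)) x := by
        simp only [Finset.mul_sum]
        rw [Finset.sum_comm]
        exact Finset.sum_congr rfl fun i _ => Finset.sum_congr rfl fun a _ => by ring
    _ = ∑ a, η' a * boxd η (g a) x := rfl

/-- box of an 8-term linear combination. -/
lemma box_lin8 (η : Fin n → ℝ) (a1 a2 a3 a4 a5 a6 a7 a8 : ℝ)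
    (f1 f2 f3 f4 f5 f6 f7 f8 : (Fin n → ℝ) → ℝ)
    (h1 : ContDiff ℝ ((2:ℕ) : WithTop ℕ∞) f1) (h2 : ContDiff ℝ ((2:ℕ) : WithTop ℕ∞) f2)
    (h3 : ContDiff ℝ ((2:ℕ) : WithTop ℕ∞) f3) (h4 : ContDiff ℝ ((2:ℕ) : WithTop ℕ∞) f4)
    (h5 : ContDiff ℝ ((2:ℕ) : WithTop ℕ∞) f5) (h6 : ContDiff ℝ ((2:ℕ) : WithTop ℕ∞) f6)
    (h7 : ContDiff ℝ ((2:ℕ) : WithTop ℕ∞) f7) (h8 : ContDiff ℝ ((2:ℕ) : WithTop ℕ∞) f8) :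
    boxd η (fun x => a1 * f1 x + a2 * f2 x + a3 * f3 x + a4 * f4 x + a5 * f5 x
        + a6 * f6 x + a7 * f7 x + a8 * f8 x)
    = fun x => a1 * boxd η f1 x + a2 * boxd η f2 x + a3 * boxd η f3 x + a4 * boxd η f4 x
        + a5 * boxd η f5 x + a6 * boxd η f6 x + a7 * boxd η f7 x + a8 * boxd η f8 x := by
  have d1 := cdiff h1 (by norm_num); have d2 := cdiff h2 (by norm_num)
  have d3 := cdiff h3 (by norm_num); have d4 := cdiff h4 (by norm_num)
  have d5 := cdiff h5 (by norm_num); have d6 := cdiff h6 (by norm_num)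
  have d7 := cdiff h7 (by norm_num); have d8 := cdiff h8 (by norm_num)
  funext x
  have e1 : ∀ i : Fin n, pd i (pd i (fun x => a1 * f1 x + a2 * f2 x + a3 * f3 x + a4 * f4 x
      + a5 * f5 x + a6 * f6 x + a7 * f7 x + a8 * f8 x)) x
      = a1 * pd i (pd i f1) x + a2 * pd i (pd i f2) x + a3 * pd i (pd i f3) x
        + a4 * pd i (pd i f4) x + a5 * pd i (pd i f5) x + a6 * pd i (pd i f6) x
        + a7 * pd i (pd i f7) x + a8 * pd i (pd i f8) x := by
    intro i
    rw [pd_congr i (pd_lin8 i a1 a2 a3 a4 a5 a6 a7 a8 f1 f2 f3 f4 f5 f6 f7 f8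
      d1 d2 d3 d4 d5 d6 d7 d8),
      pd_lin8 i a1 a2 a3 a4 a5 a6 a7 a8 _ _ _ _ _ _ _ _
      (cdiff (contDiff_pd (k:=2) (m:=1) h1 (by norm_num) i) (by norm_num))
      (cdiff (contDiff_pd (k:=2) (m:=1) h2 (by norm_num) i) (by norm_num))
      (cdiff (contDiff_pd (k:=2) (m:=1) h3 (by norm_num) i) (by norm_num))
      (cdiff (contDiff_pd (k:=2) (m:=1) h4 (by norm_num) i) (by norm_num))
      (cdiff (contDiff_pd (k:=2) (m:=1) h5 (by norm_num) i) (by norm_num))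
      (cdiff (contDiff_pd (k:=2) (m:=1) h6 (by norm_num) i) (by norm_num))
      (cdiff (contDiff_pd (k:=2) (m:=1) h7 (by norm_num) i) (by norm_num))
      (cdiff (contDiff_pd (k:=2) (m:=1) h8 (by norm_num) i) (by norm_num))]
  calc boxd η _ x
      = ∑ i, (a1 * (η i * pd i (pd i f1) x) + a2 * (η i * pd i (pd i f2) x)
        + a3 * (η i * pd i (pd i f3) x) + a4 * (η i * pd i (pd i f4) x)
        + a5 * (η i * pd i (pd i f5) x) + a6 * (η i * pd i (pd i f6) x)
        + a7 * (η i * pd i (pd i f7) x) + a8 * (η i * pd i (pd i f8) x)) :=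
        Finset.sum_congr rfl fun i _ => by rw [e1 i]; ring
    _ = _ := by rw [sum_split8]; rfl

end DFWaux
namespace DFWaux
variable {n : ℕ}

section main
variable {η : Fin n → ℝ} {L : (Fin n → ℝ) → Fin n → Fin n → Fin n → ℝ}

lemma Mf_eq (hL : ∀ a b c, ContDiff ℝ ((4:ℕ) : WithTop ℕ∞) (fun x => L x a b c))
    (hLa : ∀ x a b c, L x a b c = - L x b a c) (b d : Fin n) :
    Mf η L b d = fun x => -(Vf η L b d x + Vf η L d b x) := by
  have hLfun : ∀ a b c : Fin n, (fun y => L y a b c) = fun y => -(L y b a c) :=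
    fun a b c => funext fun y => hLa y a b c
  have e1 : ∀ i : Fin n, pd i (fun y => L y b i d) = fun x => -(pd i (fun y => L y i b d) x) := by
    intro i; rw [hLfun b i d, pd_neg]
  have e2 : ∀ i : Fin n, pd i (fun y => L y d i b) = fun x => -(pd i (fun y => L y i d b) x) := by
    intro i; rw [hLfun d i b, pd_neg]
  funext x
  show (∑ i, η i * (pd i (fun y => L y b i d) x + pd i (fun y => L y d i b) x))
      = -(Vf η L b d x + Vf η L d b x)
  calc (∑ i, η i * (pd i (fun y => L y b i d) x + pd i (fun y => L y d i b) x))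
      = ∑ i, (-(η i * pd i (fun y => L y i b d) x) + -(η i * pd i (fun y => L y i d b) x)) := by
        refine Finset.sum_congr rfl fun i _ => ?_
        rw [congrFun (e1 i) x, congrFun (e2 i) x]; ring
    _ = -(Vf η L b d x + Vf η L d b x) := by
        rw [Finset.sum_add_distrib, Finset.sum_neg_distrib, Finset.sum_neg_distrib]
        show -(∑ i, η i * pd i (fun y => L y i b d) x) + -(∑ i, η i * pd i (fun y => L y i d b) x)
            = -((∑ a, η a * pd a (fun y => L y a b d) x) + ∑ a, η a * pd a (fun y => L y a d b) x)
        ring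

lemma trM (hL : ∀ a b c, ContDiff ℝ ((4:ℕ) : WithTop ℕ∞) (fun x => L x a b c))
    (hLa : ∀ x a b c, L x a b c = - L x b a c)
    (hgauge : ∀ x a, ∑ b, η b * L x a b b = 0) :
    (fun x => ∑ b, η b * Mf η L b b x) = fun _ => (0:ℝ) := by
  funext x
  have key : ∀ i : Fin n, ∑ b, η b * pd i (fun y => L y b i b) x = 0 := by
    intro i
    have hfun : (fun y => ∑ b, η b * L y b i b) = (fun _ => (0:ℝ)) := by
      funext y
      calc ∑ b, η b * L y b i b = ∑ b, -(η b * L y i b b) :=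
            Finset.sum_congr rfl fun b _ => by rw [hLa y b i b]; ring
        _ = -∑ b, η b * L y i b b := Finset.sum_neg_distrib _
        _ = 0 := by rw [hgauge y i, neg_zero]
    have h2 : pd i (fun y => ∑ b, η b * L y b i b)
        = fun x => ∑ b, η b * pd i (fun y => L y b i b) x :=
      pd_etasum i η (fun b => fun y => L y b i b) (fun b => cdiff (hL b i b) (by norm_num))
    calc ∑ b, η b * pd i (fun y => L y b i b) x
        = pd i (fun y => ∑ b, η b * L y b i b) x := (congrFun h2 x).symm
      _ = 0 := by rw [hfun, pd_zero]
  calc ∑ b, η b * Mf η L b b x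
      = ∑ b, ∑ i, (2:ℝ) * (η i * (η b * pd i (fun y => L y b i b) x)) := by
        refine Finset.sum_congr rfl fun b _ => ?_
        show η b * (∑ i, η i * (pd i (fun y => L y b i b) x + pd i (fun y => L y b i b) x)) = _
        rw [Finset.mul_sum]
        exact Finset.sum_congr rfl fun i _ => by ring
    _ = ∑ i, ∑ b, (2:ℝ) * (η i * (η b * pd i (fun y => L y b i b) x)) := Finset.sum_comm
    _ = 0 := by
        refine Finset.sum_eq_zero fun i _ => ?_
        calc ∑ b, (2:ℝ) * (η i * (η b * pd i (fun y => L y b i b) x))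
            = (2 * η i) * ∑ b, η b * pd i (fun y => L y b i b) x := by
              rw [Finset.mul_sum]; exact Finset.sum_congr rfl fun b _ => by ring
          _ = 0 := by rw [key i, mul_zero]

lemma Pf_expand (hL : ∀ a b c, ContDiff ℝ ((4:ℕ) : WithTop ℕ∞) (fun x => L x a b c))
    (d : Fin n) (x : Fin n → ℝ) :
    Pf η L d x = ∑ a, ∑ i, η a * (η i * pd a (pd i (fun y => L y i d a)) x) := by
  show (∑ a, η a * pd a (Vf η L d a) x) = _
  refine Finset.sum_congr rfl fun a _ => ?_
  have h1 : pd a (Vf η L d a) = fun z => ∑ i, η i * pd a (pd i (fun y => L y i d a)) z := by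
    show pd a (fun y => ∑ i, η i * pd i (fun z => L z i d a) y) = _
    exact pd_etasum a η (fun i => pd i (fun y => L y i d a))
      (fun i => cdiff (contDiff_pd (k:=4) (m:=3) (hL i d a) (by norm_num) i) (by norm_num))
  rw [congrFun h1 x, Finset.mul_sum]

lemma N_eq (hL : ∀ a b c, ContDiff ℝ ((4:ℕ) : WithTop ℕ∞) (fun x => L x a b c))
    (hLa : ∀ x a b c, L x a b c = - L x b a c) (d : Fin n) :
    Nf η L d = fun x => -(Pf η L d x) := by
  have hLfun : ∀ a b c : Fin n, (fun y => L y a b c) = fun y => -(L y b a c) :=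
    fun a b c => funext fun y => hLa y a b c
  funext x
  show Nf η L d x = -(Pf η L d x)
  have eNf : Nf η L d x = (∑ a, ∑ i, η a * (η i * pd a (pd i (fun y => L y a i d)) x))
      + (∑ a, ∑ i, η a * (η i * pd a (pd i (fun y => L y d i a)) x)) := by
    show (∑ a, η a * pd a (Mf η L a d) x) = _
    have e : ∀ a : Fin n, η a * pd a (Mf η L a d) x
        = ∑ i, (η a * (η i * pd a (pd i (fun y => L y a i d)) x)
            + η a * (η i * pd a (pd i (fun y => L y d i a)) x)) := by
      intro a
      have h1 : pd a (Mf η L a d) = fun z => ∑ i, η i * pd a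
          (fun w => pd i (fun y => L y a i d) w + pd i (fun y => L y d i a) w) z := by
        show pd a (fun y => ∑ i, η i * (pd i (fun y' => L y' a i d) y
            + pd i (fun y' => L y' d i a) y)) = _
        exact pd_etasum a η
          (fun i => fun w => pd i (fun y => L y a i d) w + pd i (fun y => L y d i a) w)
          (fun i => (cdiff (contDiff_pd (k:=4) (m:=3) (hL a i d) (by norm_num) i) (by norm_num)).add
            (cdiff (contDiff_pd (k:=4) (m:=3) (hL d i a) (by norm_num) i) (by norm_num)))
      rw [congrFun h1 x, Finset.mul_sum]
      refine Finset.sum_congr rfl fun i _ => ?_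
      rw [congrFun (pd_add a
        (cdiff (contDiff_pd (k:=4) (m:=3) (hL a i d) (by norm_num) i) (by norm_num))
        (cdiff (contDiff_pd (k:=4) (m:=3) (hL d i a) (by norm_num) i) (by norm_num))) x]
      ring
    rw [Finset.sum_congr rfl fun a _ => e a]
    rw [Finset.sum_congr rfl fun a (_ : a ∈ Finset.univ) => Finset.sum_add_distrib]
    exact Finset.sum_add_distrib
  have p1 : (∑ a, ∑ i, η a * (η i * pd a (pd i (fun y => L y a i d)) x)) = 0 := by
    refine sum_antisym_zero _ ?_
    intro a i
    have hC2 : ContDiff ℝ ((2:ℕ) : WithTop ℕ∞) (fun y => L y a i d) :=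
      (hL a i d).of_le (by norm_num)
    calc η a * (η i * pd a (pd i (fun y => L y a i d)) x)
        = -(η i * (η a * -(pd i (pd a (fun y => L y a i d)) x))) := by
          rw [pd_comm (fun y => L y a i d) hC2 a i]; ring
      _ = -(η i * (η a * pd i (pd a (fun y => L y i a d)) x)) := by
          rw [hLfun i a d, pd_neg, pd_neg]
  have p2 : (∑ a, ∑ i, η a * (η i * pd a (pd i (fun y => L y d i a)) x)) = -(Pf η L d x) := by
    rw [Pf_expand hL d x]
    calc ∑ a, ∑ i, η a * (η i * pd a (pd i (fun y => L y d i a)) x)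
        = ∑ a, ∑ i, -(η a * (η i * pd a (pd i (fun y => L y i d a)) x)) := by
          refine Finset.sum_congr rfl fun a _ => Finset.sum_congr rfl fun i _ => ?_
          rw [hLfun d i a, pd_neg, pd_neg]
          show η a * (η i * -(pd a (pd i fun y => L y i d a) x)) = _
          ring
      _ = -(∑ a, ∑ i, η a * (η i * pd a (pd i (fun y => L y i d a)) x)) := by
          rw [← Finset.sum_neg_distrib]
          exact Finset.sum_congr rfl fun a _ => Finset.sum_neg_distrib _
  rw [eNf, p1, p2, zero_add]

lemma RP_eq (hL : ∀ a b c, ContDiff ℝ ((4:ℕ) : WithTop ℕ∞) (fun x => L x a b c)) (b : Fin n) :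
    (fun x => ∑ a, η a * pd a (Uf η L a b) x) = Pf η L b := by
  funext x
  have eU : (∑ a, η a * pd a (Uf η L a b) x)
      = ∑ a, ∑ i, η a * (η i * pd a (pd i (fun y => L y a b i)) x) := by
    refine Finset.sum_congr rfl fun a _ => ?_
    have h1 : pd a (Uf η L a b) = fun z => ∑ i, η i * pd a (pd i (fun y => L y a b i)) z := by
      show pd a (fun y => ∑ i, η i * pd i (fun z => L z a b i) y) = _
      exact pd_etasum a η (fun i => pd i (fun y => L y a b i))
        (fun i => cdiff (contDiff_pd (k:=4) (m:=3) (hL a b i) (by norm_num) i) (by norm_num))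
    rw [congrFun h1 x, Finset.mul_sum]
  rw [eU, Pf_expand hL b x]
  rw [Finset.sum_comm]
  refine Finset.sum_congr rfl fun a _ => Finset.sum_congr rfl fun i _ => ?_
  have hC2 : ContDiff ℝ ((2:ℕ) : WithTop ℕ∞) (fun y => L y i b a) :=
    (hL i b a).of_le (by norm_num)
  rw [pd_comm (fun y => L y i b a) hC2 a i]
  ring

end main
end DFWaux
namespace DFWaux
variable {n : ℕ}

section main2
variable {η : Fin n → ℝ} {L : (Fin n → ℝ) → Fin n → Fin n → Fin n → ℝ}

lemma pd_rhs5 (hL : ∀ a b c, ContDiff ℝ ((4:ℕ) : WithTop ℕ∞) (fun x => L x a b c))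
    (j a b c d : Fin n) :
    pd j (fun x => rhs5 η L x a b c d) = fun x =>
      pd j (pd d (fun y => L y a b c)) x - pd j (pd c (fun y => L y a b d)) x
      + pd j (pd b (fun y => L y c d a)) x - pd j (pd a (fun y => L y c d b)) x
      - (1/((n:ℝ)-2)) * (gm η a c * pd j (Mf η L b d) x - gm η b c * pd j (Mf η L a d) x
          - gm η a d * pd j (Mf η L b c) x + gm η b d * pd j (Mf η L a c) x) := by
  have e : (fun x => rhs5 η L x a b c d) = fun x =>
      pd d (fun y => L y a b c) x - pd c (fun y => L y a b d) x
      + pd b (fun y => L y c d a) x - pd a (fun y => L y c d b) x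
      - (1/((n:ℝ)-2)) * (gm η a c * Mf η L b d x - gm η b c * Mf η L a d x
          - gm η a d * Mf η L b c x + gm η b d * Mf η L a c x) := by
    funext x
    simp only [rhs5, asym22, Mf]
    ring
  have hd : ∀ (p q r : Fin n) (j' : Fin n), Differentiable ℝ (pd j' (fun y => L y p q r)) :=
    fun p q r j' => cdiff (contDiff_pd (k:=4) (m:=3) (hL p q r) (by norm_num) j') (by norm_num)
  have hm : ∀ p q : Fin n, Differentiable ℝ (Mf η L p q) :=
    fun p q => cdiff (cd_Mf hL p q) (by norm_num)
  rw [e, pd_shape8 j (1/((n:ℝ)-2)) (gm η a c) (gm η b c) (gm η a d) (gm η b d)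
    _ _ _ _ _ _ _ _ (hd a b c d) (hd a b d c) (hd c d a b) (hd c d b a)
    (hm b d) (hm a d) (hm b c) (hm a c)]

lemma HX (hη : ∀ i, η i = 1 ∨ η i = -1)
    (hL : ∀ a b c, ContDiff ℝ ((4:ℕ) : WithTop ℕ∞) (fun x => L x a b c))
    {W : (Fin n → ℝ) → Fin n → Fin n → Fin n → Fin n → ℝ}
    (hEq5 : Eq5 η W L)
    (hdiv : ∀ x b c d, ∑ a, η a * pd a (fun y => W y a b c d) x = 0)
    (c d b : Fin n) :
    boxd η (fun y => L y c d b) = fun x =>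
      pd d (Vf η L b c) x - pd c (Vf η L b d) x + pd b (Uf η L c d) x
      - (1/((n:ℝ)-2)) * (pd c (Mf η L b d) x - pd d (Mf η L b c) x
          - gm η b c * Nf η L d x + gm η b d * Nf η L c x) := by
  funext x
  have h0 := hdiv x b c d
  have hW : ∀ a : Fin n, (fun y => W y a b c d) = fun y => rhs5 η L y a b c d :=
    fun a => funext fun y => hEq5 y a b c d
  have h1 : ∀ a : Fin n, η a * pd a (fun y => W y a b c d) x
      = 1 * (η a * pd a (pd d (fun y => L y a b c)) x)
        + (-1) * (η a * pd a (pd c (fun y => L y a b d)) x)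
        + 1 * (η a * pd a (pd b (fun y => L y c d a)) x)
        + (-1) * (η a * pd a (pd a (fun y => L y c d b)) x)
        + (-(1/((n:ℝ)-2))) * (η a * (gm η a c * pd a (Mf η L b d) x))
        + ((1/((n:ℝ)-2)) * gm η b c) * (η a * pd a (Mf η L a d) x)
        + (1/((n:ℝ)-2)) * (η a * (gm η a d * pd a (Mf η L b c) x))
        + (-((1/((n:ℝ)-2)) * gm η b d)) * (η a * pd a (Mf η L a c) x) := by
    intro a
    rw [hW a, pd_rhs5 hL a a b c d]
    show η a * (pd a (pd d (fun y => L y a b c)) x - pd a (pd c (fun y => L y a b d)) x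
      + pd a (pd b (fun y => L y c d a)) x - pd a (pd a (fun y => L y c d b)) x
      - (1/((n:ℝ)-2)) * (gm η a c * pd a (Mf η L b d) x - gm η b c * pd a (Mf η L a d) x
          - gm η a d * pd a (Mf η L b c) x + gm η b d * pd a (Mf η L a c) x)) = _
    ring
  rw [Finset.sum_congr rfl (fun a _ => h1 a), sum_split8] at h0
  -- evaluate each contracted sum in h0
  have hC2 : ∀ p q r : Fin n, ContDiff ℝ ((2:ℕ) : WithTop ℕ∞) (fun y => L y p q r) :=
    fun p q r => (hL p q r).of_le (by norm_num)
  have s1 : ∑ a, η a * pd a (pd d (fun y => L y a b c)) x = pd d (Vf η L b c) x := by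
    rw [sum_eta_pd_swap η d (fun a => fun y => L y a b c) (fun a => hC2 a b c) x]; rfl
  have s2 : ∑ a, η a * pd a (pd c (fun y => L y a b d)) x = pd c (Vf η L b d) x := by
    rw [sum_eta_pd_swap η c (fun a => fun y => L y a b d) (fun a => hC2 a b d) x]; rfl
  have s3 : ∑ a, η a * pd a (pd b (fun y => L y c d a)) x = pd b (Uf η L c d) x := by
    rw [sum_eta_pd_swap η b (fun a => fun y => L y c d a) (fun a => hC2 c d a) x]; rfl
  have s5 : ∑ a, η a * (gm η a c * pd a (Mf η L b d) x) = pd c (Mf η L b d) x :=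
    sum_gm hη c (fun a => pd a (Mf η L b d) x)
  have s7 : ∑ a, η a * (gm η a d * pd a (Mf η L b c) x) = pd d (Mf η L b c) x :=
    sum_gm hη d (fun a => pd a (Mf η L b c) x)
  rw [s1, s2, s3, s5, s7] at h0
  have h4 : (∑ a, η a * pd a (pd a (fun y => L y c d b)) x) = boxd η (fun y => L y c d b) x := rfl
  have h6 : (∑ a, η a * pd a (Mf η L a d) x) = Nf η L d x := rfl
  have h8 : (∑ a, η a * pd a (Mf η L a c) x) = Nf η L c x := rfl
  rw [h4, h6, h8] at h0
  linarith [h0]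

end main2
end DFWaux
namespace DFWaux
variable {n : ℕ}

section main3
variable {η : Fin n → ℝ} {L : (Fin n → ℝ) → Fin n → Fin n → Fin n → ℝ}

lemma box_negadd (η' : Fin n → ℝ) {f g : (Fin n → ℝ) → ℝ}
    (hf : ContDiff ℝ ((2:ℕ) : WithTop ℕ∞) f) (hg : ContDiff ℝ ((2:ℕ) : WithTop ℕ∞) g) :
    boxd η' (fun x => -(f x + g x)) = fun x => -(boxd η' f x + boxd η' g x) := by
  have e : (fun x => -(f x + g x)) = fun x => (-1:ℝ)*f x + (-1)*g x + 0*f x + 0*f x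
      + 0*f x + 0*f x + 0*f x + 0*f x := by funext x; ring
  rw [e, box_lin8 η' _ _ _ _ _ _ _ _ _ _ _ _ _ _ _ _ hf hg hf hf hf hf hf hf]
  funext x; ring

lemma box_zero (η' : Fin n → ℝ) : boxd η' (fun _ : Fin n → ℝ => (0:ℝ)) = fun _ => 0 := by
  funext x
  show ∑ i, η' i * pd i (pd i (fun _ : Fin n → ℝ => (0:ℝ))) x = 0
  refine Finset.sum_eq_zero fun i _ => ?_
  rw [pd_congr i (pd_zero i), pd_zero]
  simp

lemma boxW_eq (hL : ∀ a b c, ContDiff ℝ ((4:ℕ) : WithTop ℕ∞) (fun x => L x a b c))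
    {W : (Fin n → ℝ) → Fin n → Fin n → Fin n → Fin n → ℝ}
    (hEq5 : Eq5 η W L) (a b c d : Fin n) :
    boxd η (fun y => W y a b c d) = fun x =>
      pd d (boxd η (fun y => L y a b c)) x - pd c (boxd η (fun y => L y a b d)) x
      + pd b (boxd η (fun y => L y c d a)) x - pd a (boxd η (fun y => L y c d b)) x
      - (1/((n:ℝ)-2)) * (gm η a c * boxd η (Mf η L b d) x - gm η b c * boxd η (Mf η L a d) x
          - gm η a d * boxd η (Mf η L b c) x + gm η b d * boxd η (Mf η L a c) x) := by
  have hWfun : (fun y => W y a b c d) = fun y => rhs5 η L y a b c d :=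
    funext fun y => hEq5 y a b c d
  have e : (fun y => rhs5 η L y a b c d) = fun x =>
      (1:ℝ) * pd d (fun y => L y a b c) x + (-1) * pd c (fun y => L y a b d) x
      + (1:ℝ) * pd b (fun y => L y c d a) x + (-1) * pd a (fun y => L y c d b) x
      + (-((1/((n:ℝ)-2)) * gm η a c)) * Mf η L b d x
      + ((1/((n:ℝ)-2)) * gm η b c) * Mf η L a d x
      + ((1/((n:ℝ)-2)) * gm η a d) * Mf η L b c x
      + (-((1/((n:ℝ)-2)) * gm η b d)) * Mf η L a c x := by
    funext x; simp only [rhs5, asym22, Mf]; ring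
  have hpdC2 : ∀ p q r j : Fin n, ContDiff ℝ ((2:ℕ) : WithTop ℕ∞) (pd j (fun y => L y p q r)) :=
    fun p q r j => contDiff_pd (k:=4) (m:=2) (hL p q r) (by norm_num) j
  have hMC2 : ∀ p q : Fin n, ContDiff ℝ ((2:ℕ) : WithTop ℕ∞) (Mf η L p q) :=
    fun p q => (cd_Mf hL p q).of_le (by norm_num)
  rw [hWfun, e, box_lin8 η _ _ _ _ _ _ _ _ _ _ _ _ _ _ _ _ (hpdC2 a b c d) (hpdC2 a b d c)
    (hpdC2 c d a b) (hpdC2 c d b a) (hMC2 b d) (hMC2 a d) (hMC2 b c) (hMC2 a c)]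
  funext x
  rw [box_pd ((hL a b c).of_le (by norm_num)) η d, box_pd ((hL a b d).of_le (by norm_num)) η c,
    box_pd ((hL c d a).of_le (by norm_num)) η b, box_pd ((hL c d b).of_le (by norm_num)) η a]
  ring

lemma boxM_eq (hn : 5 ≤ n) (hη : ∀ i, η i = 1 ∨ η i = -1)
    (hL : ∀ a b c, ContDiff ℝ ((4:ℕ) : WithTop ℕ∞) (fun x => L x a b c))
    (hLa : ∀ x a b c, L x a b c = - L x b a c)
    (hgauge : ∀ x a, ∑ b, η b * L x a b b = 0)
    {W : (Fin n → ℝ) → Fin n → Fin n → Fin n → Fin n → ℝ}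
    (hEq5 : Eq5 η W L)
    (hdiv : ∀ x b c d, ∑ a, η a * pd a (fun y => W y a b c d) x = 0)
    (b d : Fin n) :
    boxd η (Mf η L b d) = fun x => -(pd b (Pf η L d) x + pd d (Pf η L b) x) := by
  have hHX := HX hη hL hEq5 hdiv
  have hNeq := N_eq (η := η) hL hLa
  have hnP : ∀ j q : Fin n, pd j (Nf η L q) = fun x => -(pd j (Pf η L q) x) := by
    intro j q; rw [pd_congr j (hNeq q), pd_neg]
  -- step A
  have hA : ∀ (b d : Fin n) (x : Fin n → ℝ), boxd η (Vf η L b d) x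
      = ∑ a, η a * pd a (boxd η (fun y => L y a b d)) x := by
    intro b d x
    have h1 : boxd η (Vf η L b d) x = ∑ a, η a * boxd η (pd a (fun y => L y a b d)) x := by
      show boxd η (fun y => ∑ a, η a * pd a (fun z => L z a b d) y) x = _
      exact box_etasum η η (fun a => pd a (fun y => L y a b d))
        (fun a => contDiff_pd (k:=4) (m:=2) (hL a b d) (by norm_num) a) x
    rw [h1]
    exact Finset.sum_congr rfl fun a _ => by
      rw [box_pd ((hL a b d).of_le (by norm_num)) η a]
  -- step B
  have hB : ∀ (b d : Fin n) (x : Fin n → ℝ), boxd η (Vf η L b d) x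
      = pd b (Pf η L d) x - boxd η (Vf η L d b) x + pd d (Pf η L b) x
        - (1/((n:ℝ)-2)) * (boxd η (Mf η L d b) x - pd b (Nf η L d) x - pd d (Nf η L b) x
            + gm η b d * (∑ a, η a * pd a (Nf η L a) x)) := by
    intro b d x
    rw [hA b d x]
    have hdV : ∀ p q j : Fin n, Differentiable ℝ (pd j (Vf η L p q)) :=
      fun p q j => cdiff (contDiff_pd (k:=3) (m:=2) (cd_Vf hL p q) (by norm_num) j) (by norm_num)
    have hdU : ∀ p q j : Fin n, Differentiable ℝ (pd j (Uf η L p q)) :=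
      fun p q j => cdiff (contDiff_pd (k:=3) (m:=2) (cd_Uf hL p q) (by norm_num) j) (by norm_num)
    have hdM : ∀ p q j : Fin n, Differentiable ℝ (pd j (Mf η L p q)) :=
      fun p q j => cdiff (contDiff_pd (k:=3) (m:=2) (cd_Mf hL p q) (by norm_num) j) (by norm_num)
    have hdN : ∀ q : Fin n, Differentiable ℝ (Nf η L q) :=
      fun q => cdiff (cd_Nf hL q) (by norm_num)
    have h2 : ∀ a : Fin n, η a * pd a (boxd η (fun y => L y a b d)) x
        = 1 * (η a * pd a (pd b (Vf η L d a)) x)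
          + (-1) * (η a * pd a (pd a (Vf η L d b)) x)
          + 1 * (η a * pd a (pd d (Uf η L a b)) x)
          + (-(1/((n:ℝ)-2))) * (η a * pd a (pd a (Mf η L d b)) x)
          + (1/((n:ℝ)-2)) * (η a * pd a (pd b (Mf η L d a)) x)
          + (1/((n:ℝ)-2)) * (η a * (gm η a d * pd a (Nf η L b) x))
          + (-((1/((n:ℝ)-2)) * gm η d b)) * (η a * pd a (Nf η L a) x)
          + 0 * (η a * pd a (Nf η L a) x) := by
      intro a
      rw [hHX a b d]
      rw [pd_shape7 a (1/((n:ℝ)-2)) (gm η d a) (gm η d b) _ _ _ _ _ _ _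
        (hdV d a b) (hdV d b a) (hdU a b d) (hdM d b a) (hdM d a b) (hdN b) (hdN a)]
      show η a * (pd a (pd b (Vf η L d a)) x - pd a (pd a (Vf η L d b)) x
        + pd a (pd d (Uf η L a b)) x
        - (1/((n:ℝ)-2)) * (pd a (pd a (Mf η L d b)) x - pd a (pd b (Mf η L d a)) x
            - gm η d a * pd a (Nf η L b) x + gm η d b * pd a (Nf η L a) x)) = _
      rw [gm_comm η d a]
      ring
    rw [Finset.sum_congr rfl fun a _ => h2 a, sum_split8]
    have hVC2 : ∀ p q : Fin n, ContDiff ℝ ((2:ℕ) : WithTop ℕ∞) (Vf η L p q) :=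
      fun p q => (cd_Vf hL p q).of_le (by norm_num)
    have hUC2 : ∀ p q : Fin n, ContDiff ℝ ((2:ℕ) : WithTop ℕ∞) (Uf η L p q) :=
      fun p q => (cd_Uf hL p q).of_le (by norm_num)
    have hMC2 : ∀ p q : Fin n, ContDiff ℝ ((2:ℕ) : WithTop ℕ∞) (Mf η L p q) :=
      fun p q => (cd_Mf hL p q).of_le (by norm_num)
    have s1 : ∑ a, η a * pd a (pd b (Vf η L d a)) x = pd b (Pf η L d) x := by
      rw [sum_eta_pd_swap η b (fun a => Vf η L d a) (fun a => hVC2 d a) x]; rfl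
    have s3 : ∑ a, η a * pd a (pd d (Uf η L a b)) x = pd d (Pf η L b) x := by
      rw [sum_eta_pd_swap η d (fun a => Uf η L a b) (fun a => hUC2 a b) x]
      rw [pd_congr d (RP_eq hL b)]
    have s5 : ∑ a, η a * pd a (pd b (Mf η L d a)) x = pd b (Nf η L d) x := by
      rw [sum_eta_pd_swap η b (fun a => Mf η L d a) (fun a => hMC2 d a) x]
      have : (fun y => ∑ a, η a * pd a (Mf η L d a) y) = Nf η L d := by
        funext y
        exact Finset.sum_congr rfl fun a _ => by rw [pd_congr a (Mf_symm d a)]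
      rw [pd_congr b this]
    have s6 : ∑ a, η a * (gm η a d * pd a (Nf η L b) x) = pd d (Nf η L b) x :=
      sum_gm hη d (fun a => pd a (Nf η L b) x)
    have s2 : (∑ a, η a * pd a (pd a (Vf η L d b)) x) = boxd η (Vf η L d b) x := rfl
    have s4 : (∑ a, η a * pd a (pd a (Mf η L d b)) x) = boxd η (Mf η L d b) x := rfl
    rw [s1, s2, s3, s4, s5, s6]
    rw [gm_comm η d b]
    ring
  -- step C : the Mf/V relation
  have hMV : ∀ b d : Fin n, boxd η (Mf η L b d)
      = fun x => -(boxd η (Vf η L b d) x + boxd η (Vf η L d b) x) := by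
    intro b d
    have h1 : boxd η (Mf η L b d)
        = boxd η (fun x => -(Vf η L b d x + Vf η L d b x)) :=
      congrArg _ (Mf_eq hL hLa b d)
    rw [h1, box_negadd η ((cd_Vf hL b d).of_le (by norm_num)) ((cd_Vf hL d b).of_le (by norm_num))]
  -- σ = -τ
  have hσ : ∀ x : Fin n → ℝ, (∑ a, η a * pd a (Nf η L a) x)
      = -(∑ a, η a * pd a (Pf η L a) x) := by
    intro x
    calc ∑ a, η a * pd a (Nf η L a) x = ∑ a, -(η a * pd a (Pf η L a) x) := by
          refine Finset.sum_congr rfl fun a _ => ?_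
          rw [hnP a a]
          show η a * -(pd a (Pf η L a) x) = _
          ring
      _ = -(∑ a, η a * pd a (Pf η L a) x) := Finset.sum_neg_distrib _
  -- brel
  have brel : ∀ (b d : Fin n) (x : Fin n → ℝ),
      (1 - 1/((n:ℝ)-2)) * (boxd η (Mf η L b d) x + pd b (Pf η L d) x + pd d (Pf η L b) x)
      + (1/((n:ℝ)-2)) * gm η b d * (∑ a, η a * pd a (Pf η L a) x) = 0 := by
    intro b d x
    have h1 := hB b d x
    rw [show boxd η (Mf η L d b) = boxd η (Mf η L b d) from congrArg _ (Mf_symm d b)] at h1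
    rw [hnP b d, hnP d b, hσ x] at h1
    have h2 := congrFun (hMV b d) x
    simp only [] at h1 h2
    linear_combination -h1 + h2
  -- τ = 0
  have hτ : ∀ x : Fin n → ℝ, (∑ a, η a * pd a (Pf η L a) x) = 0 := by
    intro x
    have h1 : ∑ b, ((1 - 1/((n:ℝ)-2)) * (η b * boxd η (Mf η L b b) x)
        + (2 - 2*(1/((n:ℝ)-2))) * (η b * pd b (Pf η L b) x)
        + ((1/((n:ℝ)-2)) * (∑ a, η a * pd a (Pf η L a) x)) * (η b * gm η b b)
        + 0 * (η b * gm η b b) + 0 * (η b * gm η b b) + 0 * (η b * gm η b b)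
        + 0 * (η b * gm η b b) + 0 * (η b * gm η b b)) = 0 := by
      refine Finset.sum_eq_zero fun b _ => ?_
      have := brel b b x
      linear_combination η b * this
    rw [sum_split8] at h1
    have hz : ∑ b, η b * boxd η (Mf η L b b) x = 0 := by
      have h2 : ∑ b, η b * boxd η (Mf η L b b) x
          = boxd η (fun y => ∑ b, η b * Mf η L b b y) x :=
        (box_etasum η η (fun b => Mf η L b b)
          (fun b => (cd_Mf hL b b).of_le (by norm_num)) x).symm
      rw [h2, show boxd η (fun y => ∑ b, η b * Mf η L b b y) = boxd η (fun _ => (0:ℝ)) from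
        congrArg _ (trM hL hLa hgauge), box_zero]
    have hgg : ∑ b, η b * gm η b b = (n:ℝ) := by
      rw [Finset.sum_congr rfl fun b _ => by rw [show gm η b b = η b from by simp [gm]]]
      exact sum_eta_sq hη
    rw [hz, hgg] at h1
    have h5 : (5:ℝ) ≤ (n:ℝ) := by exact_mod_cast hn
    have hne : (n:ℝ) - 2 ≠ 0 := by linarith
    field_simp at h1
    have h4 : ((3:ℝ)*(n:ℝ) - 6) * (∑ a, η a * pd a (Pf η L a) x) = 0 := by
      linear_combination h1
    rcases mul_eq_zero.mp h4 with h | h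
    · linarith
    · exact h
  -- conclude
  funext x
  have h1 := brel b d x
  rw [hτ x] at h1
  have h5 : (5:ℝ) ≤ (n:ℝ) := by exact_mod_cast hn
  have hpos : (0:ℝ) < 1 - 1/((n:ℝ)-2) := by
    rw [sub_pos, div_lt_one (by linarith)]
    linarith
  have h2 : boxd η (Mf η L b d) x + pd b (Pf η L d) x + pd d (Pf η L b) x = 0 := by
    rcases mul_eq_zero.mp (by linarith [h1] :
        (1 - 1/((n:ℝ)-2)) * (boxd η (Mf η L b d) x + pd b (Pf η L d) x + pd d (Pf η L b) x) = 0)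
      with h | h
    · exact absurd h (ne_of_gt hpos)
    · exact h
  show boxd η (Mf η L b d) x = -(pd b (Pf η L d) x + pd d (Pf η L b) x)
  linarith

end main3
end DFWaux
/-- **Constraint for divergence-free Weyl candidates (equation (11)).**  If a smooth,
divergence-free (`W^a{}_{bcd;a} = 0`) Weyl candidate on flat `ℝⁿ` (`n ≥ 5`) admits a four
times continuously differentiable Lanczos potential `L` (with `L_{abc} = L_{[ab]c}` and
`L_{ab}{}^b = 0`) via equation (5), then `W^{ab}{}_{[cd;}{}^{i}{}_{|i|e]} = 0`. -/
theorem divergence_free_weyl_candidate_constraint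
    (n : ℕ) (hn : 5 ≤ n) (η : Fin n → ℝ) (hη : ∀ i, η i = 1 ∨ η i = -1)
    (W : (Fin n → ℝ) → Fin n → Fin n → Fin n → Fin n → ℝ)
    (hWsmooth : ∀ a b c d, ContDiff ℝ ∞ (fun x => W x a b c d))
    (hWeyl : WeylCandidate η W)
    (hdiv : ∀ x b c d, ∑ a, η a * pd a (W · a b c d) x = 0)
    (L : (Fin n → ℝ) → Fin n → Fin n → Fin n → ℝ)
    (hLC4 : ∀ a b c, ContDiff ℝ 4 (fun x => L x a b c))
    (hLasym : ∀ x a b c, L x a b c = - L x b a c)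
    (hgauge : ∀ x a, ∑ b, η b * L x a b b = 0)
    (hEq5 : Eq5 η W L) :
    ∀ x a b c d e,
      asym3 (fun c d e =>
        ∑ i, η i * pd e (pd i (pd i (W · a b c d))) x) c d e = 0 := by
  have hL : ∀ a b c, ContDiff ℝ ((4:ℕ) : WithTop ℕ∞) (fun x => L x a b c) := by
    intro a b c; exact_mod_cast hLC4 a b c
  have hHX := DFWaux.HX hη hL hEq5 hdiv
  have hboxM := DFWaux.boxM_eq hn hη hL hLasym hgauge hEq5 hdiv
  have hNeq := DFWaux.N_eq (η := η) hL hLasym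
  have hnP : ∀ j q : Fin n, pd j (DFWaux.Nf η L q) = fun x => -(pd j (DFWaux.Pf η L q) x) :=
    fun j q => by rw [DFWaux.pd_congr j (hNeq q), DFWaux.pd_neg]
  intro x a b c d e
  -- differentiability helpers
  have hVC3 := fun p q => DFWaux.cd_Vf (η := η) hL p q
  have hUC3 := fun p q => DFWaux.cd_Uf (η := η) hL p q
  have hMC3 := fun p q => DFWaux.cd_Mf (η := η) hL p q
  have hPC2 := fun q => DFWaux.cd_Pf (η := η) hL q
  have hd3 : ∀ (f : (Fin n → ℝ) → ℝ), ContDiff ℝ ((3:ℕ) : WithTop ℕ∞) f →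
      ∀ j k : Fin n, Differentiable ℝ (pd k (pd j f)) := fun f hf j k =>
    DFWaux.cdiff (DFWaux.contDiff_pd (k:=2) (m:=1)
      (DFWaux.contDiff_pd (k:=3) (m:=2) hf (by norm_num) j) (by norm_num) k) (by norm_num)
  have hd2 : ∀ (f : (Fin n → ℝ) → ℝ), ContDiff ℝ ((2:ℕ) : WithTop ℕ∞) f →
      ∀ j : Fin n, Differentiable ℝ (pd j f) := fun f hf j =>
    DFWaux.cdiff (DFWaux.contDiff_pd (k:=2) (m:=1) hf (by norm_num) j) (by norm_num)
  have hNd : ∀ q : Fin n, Differentiable ℝ (DFWaux.Nf η L q) :=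
    fun q => DFWaux.cdiff (DFWaux.cd_Nf (η := η) hL q) (by norm_num)
  have hboxL3 : ∀ p q r : Fin n, ContDiff ℝ ((2:ℕ) : WithTop ℕ∞)
      (DFWaux.boxd η (fun y => L y p q r)) :=
    fun p q r => DFWaux.cd_boxd (k:=4) (m:=2) (hL p q r) (by norm_num) η
  have hboxM1 : ∀ p q : Fin n, Differentiable ℝ (DFWaux.boxd η (DFWaux.Mf η L p q)) :=
    fun p q => DFWaux.cdiff (k := 1)
      (DFWaux.cd_boxd (k:=3) (m:=1) (hMC3 p q) (by norm_num) η) (by norm_num)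
  -- the opaque symmetric part
  obtain ⟨F, hF⟩ : ∃ F : Fin n → Fin n → Fin n → ℝ, ∀ p q r,
      F p q r = pd r (pd q (DFWaux.boxd η (fun y => L y a b p))) x
        + pd r (pd b (pd q (DFWaux.Vf η L a p))) x
        - pd r (pd a (pd q (DFWaux.Vf η L b p))) x
        + (1/((n:ℝ)-2)) * (pd r (pd b (pd q (DFWaux.Mf η L a p))) x
            - pd r (pd a (pd q (DFWaux.Mf η L b p))) x
            + gm η a p * pd r (pd q (DFWaux.Pf η L b)) x
            - gm η b p * pd r (pd q (DFWaux.Pf η L a)) x) :=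
    ⟨_, fun _ _ _ => rfl⟩
  have hkey : ∀ p q r : Fin n, (∑ i, η i * pd r (pd i (pd i (fun y => W y a b p q))) x)
      = F p q r - F q p r := by
    intro p q r
    have hWC : ∀ i : Fin n, Differentiable ℝ (pd i (pd i (fun y => W y a b p q))) := by
      intro i
      have h4 : ContDiff ℝ ((4:ℕ) : WithTop ℕ∞) (fun y => W y a b p q) :=
        (hWsmooth a b p q).of_le (by norm_cast)
      exact DFWaux.cdiff (DFWaux.contDiff_pd (k:=3) (m:=1)
        (DFWaux.contDiff_pd (k:=4) (m:=3) h4 (by norm_num) i) (by norm_num) i) (by norm_num)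
    have e0 : pd r (DFWaux.boxd η (fun y => W y a b p q)) x
        = ∑ i, η i * pd r (pd i (pd i (fun y => W y a b p q))) x :=
      congrFun (DFWaux.pd_etasum r η (fun i => pd i (pd i (fun y => W y a b p q))) hWC) x
    rw [← e0]
    rw [DFWaux.pd_congr r (DFWaux.boxW_eq hL hEq5 a b p q)]
    rw [DFWaux.pd_shape8 r (1/((n:ℝ)-2)) (gm η a p) (gm η b p) (gm η a q) (gm η b q)
      _ _ _ _ _ _ _ _
      (hd2 _ (hboxL3 a b p) q) (hd2 _ (hboxL3 a b q) p) (hd2 _ (hboxL3 p q a) b)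
      (hd2 _ (hboxL3 p q b) a) (hboxM1 b q) (hboxM1 a q) (hboxM1 b p) (hboxM1 a p)]
    rw [hHX p q a, hHX p q b]
    rw [DFWaux.pd_shape7 b (1/((n:ℝ)-2)) (gm η a p) (gm η a q) _ _ _ _ _ _ _
      (hd2 _ ((hVC3 a p).of_le (by norm_num)) q) (hd2 _ ((hVC3 a q).of_le (by norm_num)) p)
      (hd2 _ ((hUC3 p q).of_le (by norm_num)) a) (hd2 _ ((hMC3 a q).of_le (by norm_num)) p)
      (hd2 _ ((hMC3 a p).of_le (by norm_num)) q) (hNd q) (hNd p)]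
    rw [DFWaux.pd_shape7 a (1/((n:ℝ)-2)) (gm η b p) (gm η b q) _ _ _ _ _ _ _
      (hd2 _ ((hVC3 b p).of_le (by norm_num)) q) (hd2 _ ((hVC3 b q).of_le (by norm_num)) p)
      (hd2 _ ((hUC3 p q).of_le (by norm_num)) b) (hd2 _ ((hMC3 b q).of_le (by norm_num)) p)
      (hd2 _ ((hMC3 b p).of_le (by norm_num)) q) (hNd q) (hNd p)]
    rw [DFWaux.pd_shape7 r (1/((n:ℝ)-2)) (gm η a p) (gm η a q) _ _ _ _ _ _ _
      (hd3 _ (hVC3 a p) q b) (hd3 _ (hVC3 a q) p b) (hd3 _ (hUC3 p q) a b)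
      (hd3 _ (hMC3 a q) p b) (hd3 _ (hMC3 a p) q b)
      (hd2 _ (DFWaux.cd_Nf (η := η) hL q) b) (hd2 _ (DFWaux.cd_Nf (η := η) hL p) b)]
    rw [DFWaux.pd_shape7 r (1/((n:ℝ)-2)) (gm η b p) (gm η b q) _ _ _ _ _ _ _
      (hd3 _ (hVC3 b p) q a) (hd3 _ (hVC3 b q) p a) (hd3 _ (hUC3 p q) b a)
      (hd3 _ (hMC3 b q) p a) (hd3 _ (hMC3 b p) q a)
      (hd2 _ (DFWaux.cd_Nf (η := η) hL q) a) (hd2 _ (DFWaux.cd_Nf (η := η) hL p) a)]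
    rw [hboxM b q, hboxM a q, hboxM b p, hboxM a p]
    rw [DFWaux.pd_negadd r (hd2 _ ((hPC2 q)) b) (hd2 _ ((hPC2 b)) q),
      DFWaux.pd_negadd r (hd2 _ ((hPC2 q)) a) (hd2 _ ((hPC2 a)) q),
      DFWaux.pd_negadd r (hd2 _ ((hPC2 p)) b) (hd2 _ ((hPC2 b)) p),
      DFWaux.pd_negadd r (hd2 _ ((hPC2 p)) a) (hd2 _ ((hPC2 a)) p)]
    rw [hnP b q, DFWaux.pd_neg r, hnP b p, DFWaux.pd_neg r,
      hnP a q, DFWaux.pd_neg r, hnP a p, DFWaux.pd_neg r]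
    rw [DFWaux.pd_comm (DFWaux.Uf η L p q) ((hUC3 p q).of_le (by norm_num)) a b]
    rw [hF p q r, hF q p r]
    simp only []
    ring
  have hsym : ∀ p q r : Fin n, F p q r = F p r q := by
    intro p q r
    rw [hF p q r, hF p r q]
    rw [DFWaux.pd_comm (DFWaux.boxd η (fun y => L y a b p)) (hboxL3 a b p) r q]
    rw [DFWaux.pd3_swap (hVC3 a p) b q r, DFWaux.pd3_swap (hVC3 b p) a q r,
      DFWaux.pd3_swap (hMC3 a p) b q r, DFWaux.pd3_swap (hMC3 b p) a q r,
      DFWaux.pd_comm (DFWaux.Pf η L b) (hPC2 b) r q,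
      DFWaux.pd_comm (DFWaux.Pf η L a) (hPC2 a) r q]
  simp only [asym3]
  rw [hkey c d e, hkey c e d, hkey d c e, hkey d e c, hkey e c d, hkey e d c]
  rw [hsym c e d, hsym d e c, hsym e d c]
  ring
end
end

section
/- The right-hand side of the Lanczos equation has Weyl-candidate symmetries (Comment 2). Let n ≥ 3 and let L_{abc} be a continuously differentiable tensor field on flat ℝⁿ with L_{abc} = L_{[ab]c} and L_{ab}^{b} = 0. Define W^{ab}_{cd} by the right-hand side of equation (5): W^{ab}_{cd} = 2 L^{ab}_{[c;d]} + 2 L_{cd}^{[a;b]} − (4/(n−2)) δ^{[a}_{[c} ( L^{b]i}_{d];i} + L_{d]i}^{b];i} ). Then W satisfies W_{abcd} = W_{[ab]cd} = W_{ab[cd]}, W_{abcd} = W_{cdab} and W^a_{bad} = 0; in particular L is a Lanczos potential of the tensor field W so defined. -/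
open scoped ContDiff

noncomputable section

lemma pd_neg'' {n : ℕ} (i : Fin n) (f : (Fin n → ℝ) → ℝ) (x : Fin n → ℝ) :
    pd i (fun y => -f y) x = - pd i f x := by
  simp [pd]

lemma pd_zero'' {n : ℕ} (i : Fin n) (x : Fin n → ℝ) :
    pd i (fun _ : Fin n → ℝ => (0:ℝ)) x = 0 := by
  simp [pd]

lemma pd_finsum'' {n : ℕ} (i : Fin n) (c : Fin n → ℝ) (f : Fin n → (Fin n → ℝ) → ℝ)
    (hf : ∀ a, Differentiable ℝ (f a)) (x : Fin n → ℝ) :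
    ∑ a, c a * pd i (f a) x = pd i (fun y => ∑ a, c a * f a y) x := by
  unfold pd
  rw [fderiv_fun_sum (fun a _ => ((hf a).const_mul (c a)).differentiableAt)]
  rw [ContinuousLinearMap.sum_apply]
  refine Finset.sum_congr rfl fun a _ => ?_
  rw [fderiv_const_mul (hf a).differentiableAt]
  simp

/-- **The right-hand side of the Lanczos equation has Weyl-candidate symmetries
(Comment 2).**  For `C¹` `L` with `L_{abc} = L_{[ab]c}` and `L_{ab}{}^b = 0`, the tensor
field `W` defined by the right-hand side of equation (5) satisfies
`W_{abcd} = W_{[ab]cd} = W_{ab[cd]}`, `W_{abcd} = W_{cdab}` and `W^a{}_{bad} = 0`; in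
particular `L` is a Lanczos potential of this `W`. -/
theorem rhs_of_lanczos_equation_is_weyl_candidate
    (n : ℕ) (hn : 3 ≤ n) (η : Fin n → ℝ) (hη : ∀ i, η i = 1 ∨ η i = -1)
    (L : (Fin n → ℝ) → Fin n → Fin n → Fin n → ℝ)
    (hLC1 : ∀ a b c, ContDiff ℝ 1 (fun x => L x a b c))
    (hLasym : ∀ x a b c, L x a b c = - L x b a c)
    (hgauge : ∀ x a, ∑ b, η b * L x a b b = 0)
    (W : (Fin n → ℝ) → Fin n → Fin n → Fin n → Fin n → ℝ)
    (hWdef : ∀ x a b c d, W x a b c d = rhs5 η L x a b c d) :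
    (∀ x a b c d, W x a b c d = - W x b a c d) ∧
    (∀ x a b c d, W x a b c d = - W x a b d c) ∧
    (∀ x a b c d, W x a b c d = W x c d a b) ∧
    (∀ x b d, ∑ a, η a * W x a b a d = 0) ∧
    Eq5 η W L := by
  have hdiff : ∀ a b c, Differentiable ℝ (fun x => L x a b c) :=
    fun a b c => (hLC1 a b c).differentiable one_ne_zero
  have pdasym : ∀ (i : Fin n) (x : Fin n → ℝ) (a b c : Fin n),
      pd i (fun y => L y a b c) x = - pd i (fun y => L y b a c) x := by
    intro i x a b c
    have h : (fun y => L y a b c) = fun y => -(L y b a c) := funext fun y => hLasym y a b c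
    rw [h, pd_neg'']
  have gmsymm : ∀ a b : Fin n, gm η a b = gm η b a := by
    intro a b
    rcases eq_or_ne a b with h | h
    · subst h; rfl
    · simp [gm, h, Ne.symm h]
  have Fsymm : ∀ (x : Fin n → ℝ) (p q : Fin n),
      (∑ i, η i * (pd i (fun y => L y p i q) x + pd i (fun y => L y q i p) x)) =
      ∑ i, η i * (pd i (fun y => L y q i p) x + pd i (fun y => L y p i q) x) :=
    fun x p q => Finset.sum_congr rfl fun i _ => by ring
  have h1 : ∀ x a b c d, W x a b c d = - W x b a c d := by
    intro x a b c d
    rw [hWdef, hWdef]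
    simp only [rhs5, asym22]
    rw [pdasym d x b a c, pdasym c x b a d]
    ring
  have h2 : ∀ x a b c d, W x a b c d = - W x a b d c := by
    intro x a b c d
    rw [hWdef, hWdef]
    simp only [rhs5, asym22]
    rw [pdasym b x d c a, pdasym a x d c b]
    ring
  have h3 : ∀ x a b c d, W x a b c d = W x c d a b := by
    intro x a b c d
    rw [hWdef, hWdef]
    simp only [rhs5, asym22]
    rw [gmsymm c a, gmsymm d a, gmsymm c b, gmsymm d b,
      Fsymm x d b, Fsymm x c b, Fsymm x d a, Fsymm x c a]
    ring
  have hn2 : ((n : ℝ) - 2) ≠ 0 := by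
    have h3' : (3 : ℝ) ≤ (n : ℝ) := by exact_mod_cast hn
    intro h; linarith
  have hsq : ∀ a : Fin n, η a * η a = 1 := by
    intro a; rcases hη a with h | h <;> rw [h] <;> norm_num
  have gauge_pd : ∀ (i : Fin n) (x : Fin n → ℝ) (p : Fin n),
      ∑ a, η a * pd i (fun y => L y a p a) x = 0 := by
    intro i x p
    rw [pd_finsum'' i η (fun a => fun y => L y a p a) (fun a => hdiff a p a) x]
    have hz : (fun y => ∑ a, η a * L y a p a) = fun _ : Fin n → ℝ => (0:ℝ) := by
      funext y
      have hstep : ∀ a : Fin n, η a * L y a p a = -(η a * L y p a a) := fun a => by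
        rw [hLasym y a p a]; ring
      rw [Finset.sum_congr rfl fun a _ => hstep a]
      rw [Finset.sum_neg_distrib, hgauge y p, neg_zero]
    rw [hz, pd_zero'']
  have htrace : ∀ x b d, ∑ a, η a * W x a b a d = 0 := by
    intro x b d
    have hWx : ∀ a : Fin n, η a * W x a b a d =
        (η a * pd d (fun y => L y a b a) x + η a * pd b (fun y => L y a d a) x)
        - (η a * pd a (fun y => L y a b d) x + η a * pd a (fun y => L y a d b) x)
        - (4 / ((n:ℝ) - 2)) / 4 *
          (η a * gm η a a * (∑ i, η i * (pd i (fun y => L y b i d) x + pd i (fun y => L y d i b) x))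
           - η a * gm η b a * (∑ i, η i * (pd i (fun y => L y a i d) x + pd i (fun y => L y d i a) x))
           - η a * gm η a d * (∑ i, η i * (pd i (fun y => L y b i a) x + pd i (fun y => L y a i b) x))
           + η a * gm η b d * (∑ i, η i * (pd i (fun y => L y a i a) x + pd i (fun y => L y a i a) x))) := by
      intro a
      rw [hWdef]
      simp only [rhs5, asym22]
      ring
    rw [Finset.sum_congr rfl fun a _ => hWx a]
    rw [Finset.sum_sub_distrib, Finset.sum_sub_distrib, Finset.sum_add_distrib,
      Finset.sum_add_distrib, ← Finset.mul_sum]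
    rw [gauge_pd d x b, gauge_pd b x d]
    have e1 : ∑ a : Fin n,
        (η a * gm η a a * (∑ i, η i * (pd i (fun y => L y b i d) x + pd i (fun y => L y d i b) x))
           - η a * gm η b a * (∑ i, η i * (pd i (fun y => L y a i d) x + pd i (fun y => L y d i a) x))
           - η a * gm η a d * (∑ i, η i * (pd i (fun y => L y b i a) x + pd i (fun y => L y a i b) x))
           + η a * gm η b d * (∑ i, η i * (pd i (fun y => L y a i a) x + pd i (fun y => L y a i a) x)))
        = ((n:ℝ) - 2) * (∑ i, η i * (pd i (fun y => L y b i d) x + pd i (fun y => L y d i b) x)) := by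
      rw [Finset.sum_add_distrib, Finset.sum_sub_distrib, Finset.sum_sub_distrib]
      have t1 : ∑ a : Fin n, η a * gm η a a *
          (∑ i, η i * (pd i (fun y => L y b i d) x + pd i (fun y => L y d i b) x))
          = (n:ℝ) * (∑ i, η i * (pd i (fun y => L y b i d) x + pd i (fun y => L y d i b) x)) := by
        rw [← Finset.sum_mul]
        congr 1
        have : ∀ a : Fin n, η a * gm η a a = 1 := by
          intro a; simp [gm, hsq a]
        rw [Finset.sum_congr rfl fun a _ => this a]
        simp
      have t2 : ∑ a : Fin n, η a * gm η b a *
          (∑ i, η i * (pd i (fun y => L y a i d) x + pd i (fun y => L y d i a) x))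
          = ∑ i, η i * (pd i (fun y => L y b i d) x + pd i (fun y => L y d i b) x) := by
        rw [Finset.sum_eq_single b]
        · simp [gm, hsq b]
        · intro a _ ha
          simp [gm, Ne.symm ha]
        · simp
      have t3 : ∑ a : Fin n, η a * gm η a d *
          (∑ i, η i * (pd i (fun y => L y b i a) x + pd i (fun y => L y a i b) x))
          = ∑ i, η i * (pd i (fun y => L y b i d) x + pd i (fun y => L y d i b) x) := by
        rw [Finset.sum_eq_single d]
        · simp [gm, hsq d]
        · intro a _ ha
          simp [gm, ha]
        · simp
      have t4 : ∑ a : Fin n, η a * gm η b d *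
          (∑ i, η i * (pd i (fun y => L y a i a) x + pd i (fun y => L y a i a) x)) = 0 := by
        have inner : ∀ a : Fin n,
            η a * gm η b d * (∑ i, η i * (pd i (fun y => L y a i a) x + pd i (fun y => L y a i a) x))
            = gm η b d * 2 * ∑ i, η i * (η a * pd i (fun y => L y a i a) x) := by
          intro a
          rw [Finset.mul_sum]
          rw [Finset.mul_sum]
          refine Finset.sum_congr rfl fun i _ => ?_
          ring
        rw [Finset.sum_congr rfl fun a _ => inner a]
        rw [← Finset.mul_sum, Finset.sum_comm]
        have : ∀ i : Fin n, ∑ a : Fin n, η i * (η a * pd i (fun y => L y a i a) x)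
            = η i * ∑ a : Fin n, η a * pd i (fun y => L y a i a) x := by
          intro i; rw [Finset.mul_sum]
        rw [Finset.sum_congr rfl fun i _ => this i]
        have : ∀ i : Fin n, η i * (∑ a : Fin n, η a * pd i (fun y => L y a i a) x) = 0 := by
          intro i; rw [gauge_pd i x i, mul_zero]
        rw [Finset.sum_congr rfl fun i _ => this i]
        simp
      rw [t1, t2, t3, t4]
      ring
    rw [e1]
    have e2a : ∑ a : Fin n, η a * pd a (fun y => L y a b d) x
        = - ∑ i, η i * pd i (fun y => L y b i d) x := by
      rw [← Finset.sum_neg_distrib]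
      refine Finset.sum_congr rfl fun i _ => ?_
      rw [pdasym i x i b d]
      ring
    have e2b : ∑ a : Fin n, η a * pd a (fun y => L y a d b) x
        = - ∑ i, η i * pd i (fun y => L y d i b) x := by
      rw [← Finset.sum_neg_distrib]
      refine Finset.sum_congr rfl fun i _ => ?_
      rw [pdasym i x i d b]
      ring
    have eS : ∑ i, η i * (pd i (fun y => L y b i d) x + pd i (fun y => L y d i b) x)
        = (∑ i, η i * pd i (fun y => L y b i d) x)
          + ∑ i, η i * pd i (fun y => L y d i b) x := by
      rw [← Finset.sum_add_distrib]
      exact Finset.sum_congr rfl fun i _ => by ring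
    rw [e2a, e2b, eS]
    field_simp
    ring
  exact ⟨h1, h2, h3, htrace, hWdef⟩
end
end
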